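/- For every n ≥ 3, the subgroup V_n^* of VP_n, defined as the normal closure of the set {λ_{in}, λ_{ni} : 1 ≤ i ≤ n−1}, is equal to the kernel of the deletion homomorphism d_n : VP_n → VP_{n−1} (the homomorphism determined by λ_{ij} ↦ λ_{ij} for distinct i, j ≤ n−1 and λ_{in}, λ_{ni} ↦ 1). -/
import Mathlib
set_option maxRecDepth 8000


/-- Generators of the pure virtual braid group `VP n`: ordered pairs of distinct
indices, the pair `(i, j)` corresponding to the generator `λ_{ij}`. -/
def Gen (n : ℕ) : Type := {p : Fin n × Fin n // p.1 ≠ p.2}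

instance (n : ℕ) : DecidableEq (Gen n) :=
  fun a b => decidable_of_iff (a.1 = b.1) Subtype.ext_iff.symm

/-- The generator `λ_{ij}` inside the free group on the generators. -/
def lamF {n : ℕ} {i j : Fin n} (h : i ≠ j) : FreeGroup (Gen n) :=
  FreeGroup.of ⟨(i, j), h⟩

/-- `s(ab) = 1` if `a < b`, and `-1` otherwise. -/
def sgn {n : ℕ} (a b : Fin n) : ℤ := if a < b then 1 else -1

/-- The defining relators of the pure virtual braid group `VP n`:
(1) `λ_{jk} λ_{im} = λ_{im} λ_{jk}` for pairwise distinct `i, j, k, m`;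
(2) `λ_{ki}^{s(ki)} λ_{kj}^{s(kj)} λ_{ij}^{s(ij)} = λ_{ij}^{s(ij)} λ_{kj}^{s(kj)} λ_{ki}^{s(ki)}`
for pairwise distinct `i, j, k`. -/
def vpRels (n : ℕ) : Set (FreeGroup (Gen n)) :=
  {r | ∃ (i j k m : Fin n) (hjk : j ≠ k) (him : i ≠ m),
      i ≠ j ∧ i ≠ k ∧ j ≠ m ∧ k ≠ m ∧
      r = lamF hjk * lamF him * (lamF hjk)⁻¹ * (lamF him)⁻¹} ∪
  {r | ∃ (i j k : Fin n) (hki : k ≠ i) (hkj : k ≠ j) (hij : i ≠ j),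
      r = (lamF hki ^ sgn k i * lamF hkj ^ sgn k j * lamF hij ^ sgn i j) *
          (lamF hij ^ sgn i j * lamF hkj ^ sgn k j * lamF hki ^ sgn k i)⁻¹}

/-- The pure virtual braid group on `n` strands, as a presented group. -/
abbrev VP (n : ℕ) : Type := PresentedGroup (vpRels n)

/-- The generator `λ_{ij}` of `VP n`. -/
def lam {n : ℕ} {i j : Fin n} (h : i ≠ j) : VP n := PresentedGroup.of ⟨(i, j), h⟩

/-- The order-preserving inclusion of indices `{1,…,n−1} ⊆ {1,…,n}`. -/
def emb (n : ℕ) : Fin (n - 1) → Fin n := Fin.castLE (Nat.sub_le n 1)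

/-- The last index `n` (in one-based numbering) of `Fin n`. -/
def lastIdx (n : ℕ) (hn : 0 < n) : Fin n := ⟨n - 1, by omega⟩

/-- The set `{λ_{in}, λ_{ni} : 1 ≤ i ≤ n−1}` whose normal closure is `V_n^*`. -/
def VstarSet (n : ℕ) (hn : 0 < n) : Set (VP n) :=
  {x | ∃ (i : Fin n) (hi : i ≠ lastIdx n hn), x = lam hi ∨ x = lam hi.symm}

namespace VPaux

lemma mk_rel {n : ℕ} {r : FreeGroup (Gen n)} (hr : r ∈ vpRels n) :
    PresentedGroup.mk (vpRels n) r = 1 :=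
  (QuotientGroup.eq_one_iff r).mpr (Subgroup.subset_normalClosure hr)

lemma emb_ne {n : ℕ} {a b : Fin (n - 1)} (h : a ≠ b) : emb n a ≠ emb n b :=
  fun e => h (Fin.castLE_injective _ e)

lemma sgn_emb {n : ℕ} (a b : Fin (n - 1)) : sgn (emb n a) (emb n b) = sgn a b := rfl

lemma lam_eq_mk {n : ℕ} {i j : Fin n} (h : i ≠ j) :
    lam h = PresentedGroup.mk (vpRels n) (lamF h) := rfl

/-- the embedding on generators -/
def genEmb (n : ℕ) (g : Gen (n - 1)) : Gen n := ⟨(emb n g.1.1, emb n g.1.2), emb_ne g.2⟩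

/-- the map on generators -/
def f (n : ℕ) (g : Gen (n - 1)) : VP n := lam (emb_ne g.2)

lemma lift_eq (n : ℕ) : FreeGroup.lift (f n) =
    (PresentedGroup.mk (vpRels n)).comp (FreeGroup.map (genEmb n)) := by
  apply FreeGroup.ext_hom
  intro g
  rw [FreeGroup.lift_apply_of, MonoidHom.comp_apply, FreeGroup.map.of]
  rfl

lemma map_lamF {n : ℕ} {i j : Fin (n - 1)} (h : i ≠ j) :
    FreeGroup.map (genEmb n) (lamF h) = lamF (emb_ne h) := by
  simp only [lamF, FreeGroup.map.of]
  rfl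

lemma lift_f_rel (n : ℕ) : ∀ r ∈ vpRels (n - 1), FreeGroup.lift (f n) r = 1 := by
  rintro r (⟨i, j, k, m, hjk, him, hij, hik, hjm, hkm, rfl⟩ | ⟨i, j, k, hki, hkj, hij, rfl⟩)
  · rw [lift_eq, MonoidHom.comp_apply]
    apply mk_rel (n := n)
    refine Or.inl ⟨emb n i, emb n j, emb n k, emb n m,
      emb_ne hjk, emb_ne him, emb_ne hij, emb_ne hik, emb_ne hjm, emb_ne hkm, ?_⟩
    simp only [map_mul, map_inv, map_lamF]
  · rw [lift_eq, MonoidHom.comp_apply]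
    apply mk_rel (n := n)
    refine Or.inr ⟨emb n i, emb n j, emb n k,
      emb_ne hki, emb_ne hkj, emb_ne hij, ?_⟩
    simp only [map_mul, map_inv, map_zpow, map_lamF, sgn_emb]

/-- the splitting `VP (n-1) →* VP n` -/
def u0 (n : ℕ) : VP (n - 1) →* VP n := PresentedGroup.toGroup (lift_f_rel n)

lemma u0_lam {n : ℕ} {a b : Fin (n - 1)} (hab : a ≠ b) :
    u0 n (lam hab) = lam (emb_ne hab) := PresentedGroup.toGroup.of _

end VPaux

/-- For `n ≥ 3`, the subgroup `V_n^*`, the normal closure of `{λ_{in}, λ_{ni} : 1 ≤ i ≤ n−1}`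
in `VP n`, equals the kernel of the deletion homomorphism `d_n : VP n →* VP (n-1)`
(the homomorphism determined by `λ_{ij} ↦ λ_{ij}` for distinct `i, j ≤ n−1` and
`λ_{in}, λ_{ni} ↦ 1`). -/
theorem stmt_2 (n : ℕ) (hn : 3 ≤ n) (d : VP n →* VP (n - 1))
    (hd1 : ∀ (a b : Fin (n - 1)) (hab : a ≠ b) (hab' : emb n a ≠ emb n b),
      d (lam hab') = lam hab)
    (hd2 : ∀ (i : Fin n) (hi : i ≠ lastIdx n (by omega)),
      d (lam hi) = 1 ∧ d (lam hi.symm) = 1) :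
    Subgroup.normalClosure (VstarSet n (by omega)) = d.ker := by
  apply le_antisymm
  · apply Subgroup.normalClosure_le_normal
    rintro x ⟨i, hi, rfl | rfl⟩
    · exact (hd2 i hi).1
    · exact (hd2 i hi).2
  · intro x hx
    set N := Subgroup.normalClosure (VstarSet n (by omega : (0:ℕ) < n)) with hN
    have key : QuotientGroup.mk' N =
        ((QuotientGroup.mk' N).comp (VPaux.u0 n)).comp d := by
      apply PresentedGroup.ext
      rintro ⟨⟨i, j⟩, h⟩
      by_cases hj : j = lastIdx n (by omega)
      · subst hj
        have h1 : d (lam h) = 1 := (hd2 i h).1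
        have h2 : (lam h : VP n) ∈ N :=
          Subgroup.subset_normalClosure ⟨i, h, Or.inl rfl⟩
        show QuotientGroup.mk' N (lam h) = QuotientGroup.mk' N (VPaux.u0 n (d (lam h)))
        rw [h1, map_one, map_one]
        exact (QuotientGroup.eq_one_iff _).mpr h2
      · by_cases hi : i = lastIdx n (by omega)
        · subst hi
          have h1 : d (lam h) = 1 := by
            have := (hd2 j (fun e => h e.symm)).2
            exact this
          have h2 : (lam h : VP n) ∈ N :=
            Subgroup.subset_normalClosure ⟨j, fun e => h e.symm, Or.inr rfl⟩
          show QuotientGroup.mk' N (lam h) = QuotientGroup.mk' N (VPaux.u0 n (d (lam h)))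
          rw [h1, map_one, map_one]
          exact (QuotientGroup.eq_one_iff _).mpr h2
        · have hiv : (i : ℕ) < n - 1 := by
            have := i.isLt
            have : (i : ℕ) ≠ n - 1 := fun e => hi (Fin.ext e)
            omega
          have hjv : (j : ℕ) < n - 1 := by
            have := j.isLt
            have : (j : ℕ) ≠ n - 1 := fun e => hj (Fin.ext e)
            omega
          set a : Fin (n - 1) := ⟨i, hiv⟩
          set b : Fin (n - 1) := ⟨j, hjv⟩
          have hea : emb n a = i := rfl
          have heb : emb n b = j := rfl
          have hab : a ≠ b := by
            intro e
            apply h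
            have hv : (a : ℕ) = (b : ℕ) := congrArg Fin.val e
            exact Fin.ext hv
          show QuotientGroup.mk' N (lam (VPaux.emb_ne hab)) =
            QuotientGroup.mk' N (VPaux.u0 n (d (lam (VPaux.emb_ne hab))))
          rw [hd1 a b hab _, VPaux.u0_lam]
    have : QuotientGroup.mk' N x = 1 := by
      rw [key]
      simp [MonoidHom.mem_ker.mp hx]
    exact (QuotientGroup.eq_one_iff x).mp this
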